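/- Under the Protocol 1 model: if N ≥ 2 and an attack (U_E, {U_F^{(r)}}) satisfies the no-error conditions (T'), (Z') and (X'), with E_i the associated unit vectors, then E_i depends only on the Hamming weight of i: for all bitstrings i, i' with wt i = wt i', one has E_i = E_{i'}. -/

import Mathlib

/-!
Protocol 1 model (randomization-based semi-quantum key distribution):
see Boyer, Gelles, Kenigsberg, Mor, "Semi-Quantum Key Distribution".
-/

namespace SQKD1

/-- Bitstrings of length `N`. -/
abbrev Bits (N : ℕ) := Fin N → Bool

/-- The space attacked by `U_E`: Eve's probe together with the `N` travelling
qubits. -/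
abbrev HE (N d : ℕ) := EuclideanSpace ℂ (Fin d × Bits N)

/-- The space attacked by `U_F^{(r)}`: Eve's probe together with the `r`
reflected qubits. -/
abbrev HF (d r : ℕ) := EuclideanSpace ℂ (Fin d × (Fin r → Bool))

/-- Hamming weight of a bitstring. -/
def wt {n : ℕ} (y : Fin n → Bool) : ℕ := (Finset.univ.filter fun k => y k = true).card

/-- The elementary tensor `v ⊗ δ_u` of a vector `v` of Eve's probe space with a
standard basis vector `δ_u`. -/
noncomputable def tprod {d : ℕ} {ι : Type*} [DecidableEq ι]
    (v : EuclideanSpace ℂ (Fin d)) (u : ι) : EuclideanSpace ℂ (Fin d × ι) :=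
  WithLp.toLp 2 (fun p : Fin d × ι => if p.2 = u then v p.1 else 0)

/-- Condition (T'): no error on TEST bits; `U_E (ε₀ ⊗ δ_i) = E_i ⊗ δ_i`. -/
def CondT {N d : ℕ} (hd : 0 < d) (UE : HE N d ≃ₗᵢ[ℂ] HE N d)
    (E : Bits N → EuclideanSpace ℂ (Fin d)) : Prop :=
  ∀ i : Bits N,
    UE (EuclideanSpace.single ((⟨0, hd⟩ : Fin d), i) 1) = tprod (E i) i

/-- Condition (Z'): no error on Z-CTRL bits;
`U_F^{(r)} (E_i ⊗ δ_{i∘s}) = F_{s,i} ⊗ δ_{i∘s}`. -/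
def CondZ {N d : ℕ} (UF : (r : ℕ) → r ≤ N → (HF d r ≃ₗᵢ[ℂ] HF d r))
    (E : Bits N → EuclideanSpace ℂ (Fin d))
    (F : (r : ℕ) → r ≤ N → (Fin r ↪ Fin N) → Bits N → EuclideanSpace ℂ (Fin d)) :
    Prop :=
  ∀ (r : ℕ) (hr : r ≤ N) (s : Fin r ↪ Fin N) (i : Bits N),
    UF r hr (tprod (E i) (fun p => i (s p))) = tprod (F r hr s i) (fun p => i (s p))

/-- Condition (X'): no error on X-CTRL bits.  For `k := s p`, `i k = false` and
`i'` equal to `i` with bit `k` flipped, the state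
`Φ = (1/√2)(F_{s,i} ⊗ δ_{i∘s} + F_{s,i'} ⊗ δ_{i'∘s})` has, at every index
`(a,t)`, the same coefficient as at `(a, t')`, where `t'` is `t` with bit `p`
flipped. -/
def CondX {N d : ℕ}
    (F : (r : ℕ) → r ≤ N → (Fin r ↪ Fin N) → Bits N → EuclideanSpace ℂ (Fin d)) :
    Prop :=
  ∀ (r : ℕ) (hr : r ≤ N) (s : Fin r ↪ Fin N) (p : Fin r) (i : Bits N),
    i (s p) = false →
      ∀ (a : Fin d) (t : Fin r → Bool),
        ((Real.sqrt 2 : ℂ)⁻¹ •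
            (tprod (F r hr s i) (fun q => i (s q)) +
              tprod (F r hr s (Function.update i (s p) true))
                (fun q => Function.update i (s p) true (s q)))) (a, t) =
        ((Real.sqrt 2 : ℂ)⁻¹ •
            (tprod (F r hr s i) (fun q => i (s q)) +
              tprod (F r hr s (Function.update i (s p) true))
                (fun q => Function.update i (s p) true (s q))))
          (a, Function.update t p (!(t p)))

lemma tprod_inj {d : ℕ} {ι : Type*} [DecidableEq ι]
    {v w : EuclideanSpace ℂ (Fin d)} {u : ι}
    (h : tprod v u = tprod w u) : v = w := by
  ext a
  have := congrArg (fun x => x (a, u)) h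
  simpa [tprod] using this

lemma F_flip {N d : ℕ}
    {F : (r : ℕ) → r ≤ N → (Fin r ↪ Fin N) → Bits N → EuclideanSpace ℂ (Fin d)}
    (hX : CondX F) (r : ℕ) (hr : r ≤ N) (s : Fin r ↪ Fin N) (p : Fin r)
    (i : Bits N) (h : i (s p) = false) :
    F r hr s i = F r hr s (Function.update i (s p) true) := by
  ext a
  set t : Fin r → Bool := fun q => i (s q) with ht
  have htp : t p = false := h
  have key := hX r hr s p i h a t
  have hts : (fun q => Function.update i (s p) true (s q)) = Function.update t p true := by
    funext q
    by_cases hq : q = p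
    · subst hq; simp [ht]
    · have hsq : s q ≠ s p := fun hc => hq (s.injective hc)
      simp [Function.update_of_ne hsq, Function.update_of_ne hq, ht]
  have hne : t ≠ Function.update t p true := by
    intro hc
    have := congrFun hc p
    simp [htp] at this
  have hflip : Function.update t p (!(t p)) = Function.update t p true := by
    simp [htp]
  rw [hts, hflip] at key
  simp only [PiLp.smul_apply, PiLp.add_apply, tprod, PiLp.toLp_apply, ← ht, if_true, if_pos rfl,
    if_neg hne, if_neg (Ne.symm hne), add_zero, zero_add, smul_eq_mul] at key
  have hc : ((Real.sqrt 2 : ℂ))⁻¹ ≠ 0 := by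
    simp only [ne_eq, inv_eq_zero, Complex.ofReal_eq_zero]
    positivity
  exact mul_left_cancel₀ hc key

lemma F_const {N d : ℕ}
    {F : (r : ℕ) → r ≤ N → (Fin r ↪ Fin N) → Bits N → EuclideanSpace ℂ (Fin d)}
    (hX : CondX F) (hr : N ≤ N) (s : Fin N ↪ Fin N)
    (hs : Function.Surjective s) (i : Bits N) :
    F N hr s i = F N hr s (fun _ => true) := by
  generalize hn : (Finset.univ.filter fun k => i k = false).card = n
  induction n generalizing i with
  | zero =>
    have hi : i = fun _ => true := by
      funext k
      by_contra hk
      have hk' : i k = false := by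
        cases hik : i k
        · rfl
        · exact absurd hik hk
      have : k ∈ Finset.univ.filter fun k => i k = false := by
        simp [hk']
      rw [Finset.card_eq_zero] at hn
      simp [hn] at this
    rw [hi]
  | succ n ih =>
    have hne : (Finset.univ.filter fun k => i k = false).Nonempty := by
      rw [← Finset.card_pos, hn]; omega
    obtain ⟨k, hk⟩ := hne
    have hk' : i k = false := by simpa using hk
    obtain ⟨p, hp⟩ := hs k
    have h1 : F N hr s i = F N hr s (Function.update i k true) := by
      rw [← hp] at hk' ⊢
      exact F_flip hX N hr s p i hk'
    rw [h1]
    apply ih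
    have hset : (Finset.univ.filter fun j => Function.update i k true j = false)
        = (Finset.univ.filter fun j => i j = false).erase k := by
      ext j
      by_cases hj : j = k
      · subst hj; simp
      · simp [Function.update_of_ne hj, hj]
    rw [hset, Finset.card_erase_of_mem hk, hn]
    rfl

lemma E_swap {N d : ℕ}
    {UF : (r : ℕ) → r ≤ N → (HF d r ≃ₗᵢ[ℂ] HF d r)}
    {E : Bits N → EuclideanSpace ℂ (Fin d)}
    {F : (r : ℕ) → r ≤ N → (Fin r ↪ Fin N) → Bits N → EuclideanSpace ℂ (Fin d)}
    (hZ : CondZ UF E F) (hX : CondX F) (k l : Fin N) (i : Bits N) :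
    E (i ∘ Equiv.swap k l) = E i := by
  set τ := Equiv.swap k l with hτ
  set s₁ : Fin N ↪ Fin N := (Equiv.refl (Fin N)).toEmbedding with hs₁
  set s₂ : Fin N ↪ Fin N := τ.toEmbedding with hs₂
  have hsurj₁ : Function.Surjective s₁ := (Equiv.refl (Fin N)).surjective
  have hsurj₂ : Function.Surjective s₂ := τ.surjective
  set c : Bits N := fun _ => true with hc
  -- the two constants coincide
  have e1 := hZ N le_rfl s₁ c
  have e2 := hZ N le_rfl s₂ c
  have hc1 : (fun p => c (s₁ p)) = c := rfl
  have hc2 : (fun p => c (s₂ p)) = c := rfl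
  rw [hc1] at e1
  rw [hc2] at e2
  have hAB : F N le_rfl s₁ c = F N le_rfl s₂ c :=
    tprod_inj (e1.symm.trans e2)
  -- now the general string
  have e3 := hZ N le_rfl s₁ i
  have e4 := hZ N le_rfl s₂ (i ∘ τ)
  have hi1 : (fun p => i (s₁ p)) = i := rfl
  have hi2 : (fun p => (i ∘ τ) (s₂ p)) = i := by
    funext p
    simp [hs₂, hτ, Function.comp, Equiv.swap_apply_self]
  rw [hi1] at e3
  rw [hi2] at e4
  have hF3 : F N le_rfl s₁ i = F N le_rfl s₁ c := F_const hX le_rfl s₁ hsurj₁ i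
  have hF4 : F N le_rfl s₂ (i ∘ τ) = F N le_rfl s₂ c := F_const hX le_rfl s₂ hsurj₂ _
  have hRHS : tprod (F N le_rfl s₁ i) i = tprod (F N le_rfl s₂ (i ∘ τ)) i := by
    rw [hF3, hF4, hAB]
  have hinputs : tprod (E i) i = tprod (E (i ∘ τ)) i :=
    (UF N le_rfl).injective (e3.trans (hRHS.trans e4.symm))
  exact (tprod_inj hinputs).symm

lemma E_perm {N d : ℕ}
    {E : Bits N → EuclideanSpace ℂ (Fin d)}
    (hswap : ∀ (k l : Fin N) (i : Bits N), E (i ∘ Equiv.swap k l) = E i) :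
    ∀ (σ : Equiv.Perm (Fin N)) (i : Bits N), E (i ∘ σ) = E i := by
  intro σ
  refine Equiv.Perm.swap_induction_on σ ?_ ?_
  · intro i; rfl
  · intro f x y hxy ih i
    have : i ∘ ⇑(Equiv.swap x y * f) = (i ∘ Equiv.swap x y) ∘ f := rfl
    rw [this, ih, hswap]

lemma exists_perm {N : ℕ} {i i' : Bits N} (h : wt i = wt i') :
    ∃ σ : Equiv.Perm (Fin N), i ∘ σ = i' := by
  have h1 : Fintype.card {k // i' k = true} = Fintype.card {k // i k = true} := by
    simp only [Fintype.card_subtype]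
    exact h.symm
  have h2 : Fintype.card {k // ¬ i' k = true} = Fintype.card {k // ¬ i k = true} := by
    rw [Fintype.card_subtype_compl, Fintype.card_subtype_compl, h1]
  let e₁ := Fintype.equivOfCardEq h1
  let e₂ := Fintype.equivOfCardEq h2
  refine ⟨(Equiv.sumCompl (fun k => i' k = true)).symm.trans
    ((Equiv.sumCongr e₁ e₂).trans (Equiv.sumCompl (fun k => i k = true))), ?_⟩
  funext x
  by_cases hx : i' x = true
  · have : (Equiv.sumCompl (fun k => i' k = true)).symm x = Sum.inl ⟨x, hx⟩ :=
      Equiv.sumCompl_symm_apply_of_pos (p := fun k => i' k = true) (a := x) hx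
    simp only [Function.comp_apply, Equiv.trans_apply, this, Equiv.sumCongr_apply,
      Sum.map_inl, Equiv.sumCompl_apply_inl]
    rw [(e₁ ⟨x, hx⟩).2, hx]
  · have hx' : i' x = false := by
      cases hix : i' x
      · rfl
      · exact absurd hix hx
    have : (Equiv.sumCompl (fun k => i' k = true)).symm x = Sum.inr ⟨x, hx⟩ :=
      Equiv.sumCompl_symm_apply_of_neg (p := fun k => i' k = true) (a := x) hx
    simp only [Function.comp_apply, Equiv.trans_apply, this, Equiv.sumCongr_apply,
      Sum.map_inr, Equiv.sumCompl_apply_inr]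
    have := (e₂ ⟨x, hx⟩).2
    cases hval : i (e₂ ⟨x, hx⟩).1
    · rw [hx']
    · exact absurd hval this


/-- **Lemma 3 of the paper.** If `N ≥ 2` and the attack induces
no error on TEST and CTRL bits, then `E_i` depends only on the Hamming weight
of `i`. -/
theorem protocol1_E_depends_only_on_weight (N d : ℕ) (hN : 2 ≤ N) (hd : 0 < d)
    (UE : HE N d ≃ₗᵢ[ℂ] HE N d)
    (UF : (r : ℕ) → r ≤ N → (HF d r ≃ₗᵢ[ℂ] HF d r))
    (E : Bits N → EuclideanSpace ℂ (Fin d))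
    (F : (r : ℕ) → r ≤ N → (Fin r ↪ Fin N) → Bits N → EuclideanSpace ℂ (Fin d))
    (hT : CondT hd UE E) (hZ : CondZ UF E F) (hX : CondX F) :
    ∀ i i' : Bits N, wt i = wt i' → E i = E i' := by
  intro i i' h
  obtain ⟨σ, hσ⟩ := exists_perm h
  have := E_perm (fun k l j => E_swap hZ hX k l j) σ i
  rw [hσ] at this
  exact this.symm

end SQKD1
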